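/- arXiv:2511.04844 — 4 statements merged into one kernel-verified Lean document; each statement's English description precedes it below -/
import Mathlib

section
/- There is a universal constant C such that the following holds. Let d ≥ 1, β ≥ 1, h > 0 with βh ≤ 1, and τ ∈ [0,h], and let s₁, s₂ : ℝ^d → ℝ^d be β-Lipschitz maps. For x, ξ⁺, ξ ∈ ℝ^d define X⁺(x) = e^{−τ} x + 2(1−e^{−τ}) s₁(x) + ξ⁺ and F(x) = e^{−h} x + 2(1−e^{−h}) s₂(X⁺(x)) + ξ. Then for all x, y ∈ ℝ^d and all ξ⁺, ξ ∈ ℝ^d: ‖F(x) − F(y) − (x − y)‖ ≤ C·βh·‖x − y‖, and consequently ‖F(x) − F(y)‖ ≤ (1 + C·βh)·‖x − y‖. (These are the coupling and Wasserstein-Lipschitzness properties of one step of the randomized midpoint discretization under synchronous coupling of the Gaussian noise.) -/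
open MeasureTheory Real
open scoped RealInnerProductSpace ENNReal Classical

noncomputable section

/-- `Euc d` is Euclidean space `ℝ^d`. -/
abbrev Euc (d : ℕ) := EuclideanSpace ℝ (Fin d)

/-- The standard Gaussian measure `N(0, I_d)` on `ℝ^d`. -/
def stdGaussian (d : ℕ) : Measure (Euc d) :=
  volume.withDensity fun x =>
    ENNReal.ofReal ((2 * π) ^ (-(d : ℝ) / 2) * Real.exp (-‖x‖ ^ 2 / 2))

/-- The density `p_t` of the Ornstein–Uhlenbeck flow of `μ` at time `t`. -/
def ouDensity (d : ℕ) (μ : Measure (Euc d)) (t : ℝ) (x : Euc d) : ℝ :=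
  (2 * π * (1 - Real.exp (-2 * t))) ^ (-(d : ℝ) / 2) *
    ∫ y, Real.exp (-‖x - Real.exp (-t) • y‖ ^ 2 / (2 * (1 - Real.exp (-2 * t)))) ∂μ

/-- The Ornstein–Uhlenbeck flow `μ_t` of `μ` at time `t`, i.e. the measure with
density `p_t` with respect to Lebesgue measure. -/
def ouFlow (d : ℕ) (μ : Measure (Euc d)) (t : ℝ) : Measure (Euc d) :=
  volume.withDensity fun x => ENNReal.ofReal (ouDensity d μ t x)

/-- The relative score `x ↦ ∇ log p_t(x) + x` of `μ_t`. -/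
def relScore (d : ℕ) (μ : Measure (Euc d)) (t : ℝ) (x : Euc d) : Euc d :=
  gradient (fun z => Real.log (ouDensity d μ t z)) x + x

/-- The relative Fisher information `FI(μ_t ‖ γ_d) = ∫ ‖∇ log p_t + x‖² dμ_t`. -/
def relFisher (d : ℕ) (μ : Measure (Euc d)) (t : ℝ) : ℝ :=
  ∫ x, ‖relScore d μ t x‖ ^ 2 ∂(ouFlow d μ t)

/-- Kullback–Leibler divergence `KL(ρ ‖ σ)`. -/
def KLdiv {α : Type*} [MeasurableSpace α] (ρ σ : Measure α) : ℝ≥0∞ :=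
  if ρ ≪ σ then ENNReal.ofReal (∫ x, Real.log ((ρ.rnDeriv σ x).toReal) ∂ρ) else ⊤

/-- One step of the randomized midpoint discretization with fixed noise realizations:
`F(x) = e^{−h} x + 2(1−e^{−h}) s₂(X⁺(x)) + ξ` with
`X⁺(x) = e^{−τ} x + 2(1−e^{−τ}) s₁(x) + ξ⁺`. -/
def rmdStepDet (d : ℕ) (s₁ s₂ : Euc d → Euc d) (h τ : ℝ) (ξp ξ : Euc d) (x : Euc d) : Euc d :=
  Real.exp (-h) • x +
    (2 * (1 - Real.exp (-h))) •
      s₂ (Real.exp (-τ) • x + (2 * (1 - Real.exp (-τ))) • s₁ x + ξp) + ξ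

/-- coupling and Wasserstein Lipschitzness of one randomized midpoint step.
There is a universal constant `C` such that for `β ≥ 1`, `0 < h` with `βh ≤ 1`, `τ ∈ [0,h]`,
`β`-Lipschitz maps `s₁, s₂`, and any noise realizations `ξ⁺, ξ`:
`‖F(x) − F(y) − (x − y)‖ ≤ C βh ‖x − y‖` and `‖F(x) − F(y)‖ ≤ (1 + C βh) ‖x − y‖`. -/
theorem statement_7 :
    ∃ C : ℝ, 0 < C ∧
      ∀ (d : ℕ), 1 ≤ d →
        ∀ (β h τ : ℝ), 1 ≤ β → 0 < h → β * h ≤ 1 → τ ∈ Set.Icc 0 h →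
          ∀ s₁ s₂ : Euc d → Euc d,
            (∀ x y, ‖s₁ x - s₁ y‖ ≤ β * ‖x - y‖) →
            (∀ x y, ‖s₂ x - s₂ y‖ ≤ β * ‖x - y‖) →
            ∀ ξp ξ : Euc d, ∀ x y : Euc d,
              ‖rmdStepDet d s₁ s₂ h τ ξp ξ x - rmdStepDet d s₁ s₂ h τ ξp ξ y - (x - y)‖ ≤
                  C * β * h * ‖x - y‖ ∧
              ‖rmdStepDet d s₁ s₂ h τ ξp ξ x - rmdStepDet d s₁ s₂ h τ ξp ξ y‖ ≤
                  (1 + C * β * h) * ‖x - y‖ := by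
  refine ⟨7, by norm_num, ?_⟩
  intro d hd β h τ hβ hh hβh hτ s₁ s₂ hs₁ hs₂ ξp ξ x y
  have hτ0 : 0 ≤ τ := hτ.1
  have hτh : τ ≤ h := hτ.2
  set A := Real.exp (-τ) • x + (2 * (1 - Real.exp (-τ))) • s₁ x + ξp with hA
  set B := Real.exp (-τ) • y + (2 * (1 - Real.exp (-τ))) • s₁ y + ξp with hB
  have heh1 : Real.exp (-h) ≤ 1 := Real.exp_le_one_iff.2 (by linarith)
  have heh2 : 1 - h ≤ Real.exp (-h) := by
    have := Real.add_one_le_exp (-h); linarith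
  have heτ1 : Real.exp (-τ) ≤ 1 := Real.exp_le_one_iff.2 (by linarith)
  have heτ2 : 1 - τ ≤ Real.exp (-τ) := by
    have := Real.add_one_le_exp (-τ); linarith
  have hβ0 : (0:ℝ) < β := by linarith
  have hβτ : β * τ ≤ 1 := le_trans (by nlinarith) hβh
  -- bound on ‖A - B‖
  have hABeq : A - B = Real.exp (-τ) • (x - y) + (2 * (1 - Real.exp (-τ))) • (s₁ x - s₁ y) := by
    simp only [hA, hB, smul_sub]; abel
  have hAB : ‖A - B‖ ≤ 3 * ‖x - y‖ := by
    rw [hABeq]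
    calc ‖Real.exp (-τ) • (x - y) + (2 * (1 - Real.exp (-τ))) • (s₁ x - s₁ y)‖
        ≤ ‖Real.exp (-τ) • (x - y)‖ + ‖(2 * (1 - Real.exp (-τ))) • (s₁ x - s₁ y)‖ :=
          norm_add_le _ _
      _ = Real.exp (-τ) * ‖x - y‖ + |2 * (1 - Real.exp (-τ))| * ‖s₁ x - s₁ y‖ := by
          rw [norm_smul, norm_smul, Real.norm_eq_abs, Real.norm_eq_abs,
            abs_of_pos (Real.exp_pos _)]
      _ ≤ 1 * ‖x - y‖ + (2 * τ) * (β * ‖x - y‖) := by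
          have h1 : |2 * (1 - Real.exp (-τ))| ≤ 2 * τ := by
            rw [abs_of_nonneg (by linarith)]; linarith
          have h2 : ‖s₁ x - s₁ y‖ ≤ β * ‖x - y‖ := hs₁ x y
          have h3 : (0:ℝ) ≤ 2 * τ := by linarith
          gcongr
      _ ≤ 3 * ‖x - y‖ := by nlinarith [norm_nonneg (x - y)]
  have key : rmdStepDet d s₁ s₂ h τ ξp ξ x - rmdStepDet d s₁ s₂ h τ ξp ξ y - (x - y) =
      (Real.exp (-h) - 1) • (x - y) + (2 * (1 - Real.exp (-h))) • (s₂ A - s₂ B) := by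
    simp only [rmdStepDet, ← hA, ← hB, smul_sub, sub_smul, one_smul]; abel
  have hmain : ‖rmdStepDet d s₁ s₂ h τ ξp ξ x - rmdStepDet d s₁ s₂ h τ ξp ξ y - (x - y)‖ ≤
      7 * β * h * ‖x - y‖ := by
    rw [key]
    calc ‖(Real.exp (-h) - 1) • (x - y) + (2 * (1 - Real.exp (-h))) • (s₂ A - s₂ B)‖
        ≤ ‖(Real.exp (-h) - 1) • (x - y)‖ + ‖(2 * (1 - Real.exp (-h))) • (s₂ A - s₂ B)‖ :=
          norm_add_le _ _
      _ = |Real.exp (-h) - 1| * ‖x - y‖ + |2 * (1 - Real.exp (-h))| * ‖s₂ A - s₂ B‖ := by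
          rw [norm_smul, norm_smul, Real.norm_eq_abs, Real.norm_eq_abs]
      _ ≤ h * ‖x - y‖ + (2 * h) * (β * (3 * ‖x - y‖)) := by
          have h1 : |Real.exp (-h) - 1| ≤ h := by
            rw [abs_sub_comm, abs_of_nonneg (by linarith)]; linarith
          have h2 : |2 * (1 - Real.exp (-h))| ≤ 2 * h := by
            rw [abs_of_nonneg (by linarith)]; linarith
          have h3 : ‖s₂ A - s₂ B‖ ≤ β * (3 * ‖x - y‖) :=
            le_trans (hs₂ A B) (by nlinarith)
          have h4 : (0:ℝ) ≤ 2 * h := by linarith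
          gcongr
      _ ≤ 7 * β * h * ‖x - y‖ := by
          nlinarith [mul_nonneg (mul_nonneg (sub_nonneg.2 hβ) hh.le) (norm_nonneg (x - y))]
  refine ⟨hmain, ?_⟩
  calc ‖rmdStepDet d s₁ s₂ h τ ξp ξ x - rmdStepDet d s₁ s₂ h τ ξp ξ y‖
      ≤ ‖rmdStepDet d s₁ s₂ h τ ξp ξ x - rmdStepDet d s₁ s₂ h τ ξp ξ y - (x - y)‖ + ‖x - y‖ := by
        have := norm_add_le (rmdStepDet d s₁ s₂ h τ ξp ξ x - rmdStepDet d s₁ s₂ h τ ξp ξ y - (x - y)) (x - y)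
        simpa using this
    _ ≤ 7 * β * h * ‖x - y‖ + 1 * ‖x - y‖ := by linarith [hmain]
    _ = (1 + 7 * β * h) * ‖x - y‖ := by ring
end
end

section
/- Let d ≥ 1, let e₁ be the first standard basis vector of ℝ^d, and let μ = (1/2)δ_{e₁} + (1/2)δ_{−e₁}. Then for every t > 0 and every x ∈ ℝ^d, writing x₁ = ⟨e₁, x⟩, the Hessian of log p_t is given explicitly by ∇²log p_t(x) = −(1/(1−e^{−2t})) I_d + (e^{−2t}/(1−e^{−2t})²)·sech²(x₁/(2·sinh t))·e₁e₁ᵀ. -/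
open MeasureTheory Real
open scoped RealInnerProductSpace ENNReal Classical

noncomputable section

/-- The equal mixture of two point masses `(1/2)δ_e + (1/2)δ_{−e}`. -/
def twoPointMix (d : ℕ) (e : Euc d) : Measure (Euc d) :=
  (1 / 2 : ℝ≥0∞) • Measure.dirac e + (1 / 2 : ℝ≥0∞) • Measure.dirac (-e)

/- ### Auxiliary lemmas -/

lemma integrable_dirac_of_cont {d : ℕ} {f : Euc d → ℝ} (hf : Continuous f) (a : Euc d) :
    Integrable f (Measure.dirac a) := by
  refine ⟨hf.aestronglyMeasurable, ?_⟩
  rw [HasFiniteIntegral, lintegral_dirac]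
  exact ENNReal.coe_lt_top

/-- The integral appearing in `ouDensity` for the two-point mixture, computed. -/
lemma twoPoint_integral {d : ℕ} (e : Euc d) (he : ‖e‖ = 1) (t : ℝ) (ht : 0 < t) (z : Euc d) :
    ∫ y, Real.exp (-‖z - Real.exp (-t) • y‖ ^ 2 / (2 * (1 - Real.exp (-2 * t))))
        ∂((1 / 2 : ℝ≥0∞) • Measure.dirac e + (1 / 2 : ℝ≥0∞) • Measure.dirac (-e)) =
      Real.exp (-(‖z‖ ^ 2 + Real.exp (-t) ^ 2) / (2 * (1 - Real.exp (-2 * t)))) *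
        Real.cosh (Real.exp (-t) / (1 - Real.exp (-2 * t)) * ⟪e, z⟫) := by
  have hs : 0 < 1 - Real.exp (-2 * t) := by
    have : Real.exp (-2 * t) < 1 := by
      rw [Real.exp_lt_one_iff]; linarith
    linarith
  set s := 1 - Real.exp (-2 * t) with hsdef
  set a := Real.exp (-t) with hadef
  have hc : Continuous fun y : Euc d => Real.exp (-‖z - a • y‖ ^ 2 / (2 * s)) := by
    fun_prop
  rw [integral_add_measure ((integrable_dirac_of_cont hc e).smul_measure (by norm_num))
        ((integrable_dirac_of_cont hc (-e)).smul_measure (by norm_num)),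
      integral_smul_measure, integral_smul_measure, integral_dirac, integral_dirac]
  have hne : ‖a • e‖ ^ 2 = a ^ 2 := by
    rw [norm_smul, he, Real.norm_eq_abs, abs_of_pos (Real.exp_pos _)]; ring
  have hie : ⟪z, a • e⟫ = a * ⟪e, z⟫ := by
    rw [real_inner_smul_right, real_inner_comm]
  have h1 : -‖z - a • e‖ ^ 2 / (2 * s) =
      -(‖z‖ ^ 2 + a ^ 2) / (2 * s) + a / s * ⟪e, z⟫ := by
    rw [norm_sub_sq_real, hne, hie]; field_simp; ring
  have h2 : -‖z - a • (-e)‖ ^ 2 / (2 * s) =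
      -(‖z‖ ^ 2 + a ^ 2) / (2 * s) - a / s * ⟪e, z⟫ := by
    rw [smul_neg, sub_neg_eq_add, norm_add_sq_real, hne, hie]; field_simp; ring
  rw [h1, h2, Real.exp_add, sub_eq_add_neg, Real.exp_add, Real.cosh_eq]
  simp only [ENNReal.toReal_div]
  norm_num
  ring

/-- The gradient of `K - ‖w‖²/(2s) + log cosh (b⟪e,w⟫)`. -/
lemma gradAux {d : ℕ} (e : Euc d) (K s b : ℝ) (z : Euc d) :
    gradient (fun w : Euc d => K - ‖w‖ ^ 2 / (2 * s) + Real.log (Real.cosh (b * ⟪e, w⟫))) z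
      = (-(1 / s)) • z + (b * Real.tanh (b * ⟪e, z⟫)) • e := by
  have hF : HasFDerivAt (fun w : Euc d => K - ‖w‖ ^ 2 / (2 * s) + Real.log (Real.cosh (b * ⟪e, w⟫)))
      ((InnerProductSpace.toDual ℝ (Euc d)) ((-(1 / s)) • z + (b * Real.tanh (b * ⟪e, z⟫)) • e)) z := by
    have hsq : HasFDerivAt (fun w : Euc d => ‖w‖ ^ 2 / (2 * s))
        ((2 * s)⁻¹ • ((fderivInnerCLM ℝ (z, z)).comp
          ((ContinuousLinearMap.id ℝ (Euc d)).prod (ContinuousLinearMap.id ℝ (Euc d))))) z := by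
      have h := ((hasFDerivAt_id z).inner ℝ (hasFDerivAt_id z)).const_smul ((2 * s)⁻¹)
      have : (fun w : Euc d => ‖w‖ ^ 2 / (2 * s)) = fun w : Euc d => (2 * s)⁻¹ • ⟪w, w⟫ := by
        funext w; rw [real_inner_self_eq_norm_sq]; simp [div_eq_inv_mul]
      rw [this]
      exact h
    have hinner : HasFDerivAt (fun w : Euc d => ⟪e, w⟫) (innerSL ℝ e) z :=
      (innerSL ℝ e).hasFDerivAt
    have hφ : HasDerivAt (fun u : ℝ => Real.log (Real.cosh (b * u)))
        (b * Real.tanh (b * ⟪e, z⟫)) ⟪e, z⟫ := by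
      have h1 : HasDerivAt (fun u : ℝ => b * u) b ⟪e, z⟫ := by
        simpa using (hasDerivAt_id (⟪e, z⟫ : ℝ)).const_mul b
      have h2 : HasDerivAt (fun u : ℝ => Real.cosh (b * u))
          (Real.sinh (b * ⟪e, z⟫) * b) ⟪e, z⟫ := h1.cosh
      have h3 := h2.log (ne_of_gt (Real.cosh_pos _))
      convert h3 using 1
      rw [Real.tanh_eq_sinh_div_cosh]; ring
    have hcomp := hφ.comp_hasFDerivAt z hinner
    have htotal := ((hasFDerivAt_const K z).sub hsq).add hcomp
    refine htotal.congr_fderiv ?_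
    ext u
    simp [InnerProductSpace.toDual_apply_apply, inner_add_left, real_inner_smul_left,
      fderivInnerCLM_apply, real_inner_comm z u]
    ring
  exact (hasGradientAt_iff_hasFDerivAt.2 (by exact hF)).gradient

/-- The Hessian (as a bilinear form) of the explicit gradient field. -/
lemma hessAux {d : ℕ} (e : Euc d) (s b : ℝ) (x u v : Euc d) :
    ⟪(fderiv ℝ (fun z : Euc d => (-(1 / s)) • z + (b * Real.tanh (b * ⟪e, z⟫)) • e) x) u, v⟫ =
      -(1 / s) * ⟪u, v⟫ +
        b ^ 2 * (1 / Real.cosh (b * ⟪e, x⟫)) ^ 2 * (⟪e, u⟫ * ⟪e, v⟫) := by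
  have hφ : HasDerivAt (fun w : ℝ => b * Real.tanh (b * w))
      (b ^ 2 * (1 / Real.cosh (b * ⟪e, x⟫)) ^ 2) ⟪e, x⟫ := by
    have h1 : HasDerivAt (fun w : ℝ => b * w) b ⟪e, x⟫ := by
      simpa using (hasDerivAt_id (⟪e, x⟫ : ℝ)).const_mul b
    have hsinh : HasDerivAt (fun w : ℝ => Real.sinh (b * w))
        (Real.cosh (b * ⟪e, x⟫) * b) ⟪e, x⟫ := h1.sinh
    have hcosh : HasDerivAt (fun w : ℝ => Real.cosh (b * w))
        (Real.sinh (b * ⟪e, x⟫) * b) ⟪e, x⟫ := h1.cosh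
    have hdiv := (hsinh.div hcosh (ne_of_gt (Real.cosh_pos _))).const_mul b
    have heq : (fun w : ℝ => b * (Real.sinh (b * w) / Real.cosh (b * w)))
        = fun w : ℝ => b * Real.tanh (b * w) := by
      funext w; rw [Real.tanh_eq_sinh_div_cosh]
    simp only [Pi.div_apply] at hdiv
    rw [heq] at hdiv
    refine hdiv.congr_deriv ?_
    have hc := ne_of_gt (Real.cosh_pos (b * ⟪e, x⟫))
    have hid : Real.cosh (b * ⟪e, x⟫) ^ 2 - Real.sinh (b * ⟪e, x⟫) ^ 2 = 1 :=
      Real.cosh_sq_sub_sinh_sq _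
    have hnum : Real.cosh (b * ⟪e, x⟫) * b * Real.cosh (b * ⟪e, x⟫) -
        Real.sinh (b * ⟪e, x⟫) * (Real.sinh (b * ⟪e, x⟫) * b)
        = b * (Real.cosh (b * ⟪e, x⟫) ^ 2 - Real.sinh (b * ⟪e, x⟫) ^ 2) := by ring
    rw [hnum, hid]
    field_simp
  have hinner : HasFDerivAt (fun z : Euc d => ⟪e, z⟫) (innerSL ℝ e) x :=
    (innerSL ℝ e).hasFDerivAt
  have hcomp := (hφ.comp_hasFDerivAt x hinner).smul_const e
  have hid : HasFDerivAt (fun z : Euc d => (-(1 / s)) • z)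
      ((-(1 / s)) • ContinuousLinearMap.id ℝ (Euc d)) x := by exact (hasFDerivAt_id x).const_smul (-(1 / s))
  have htot' : HasFDerivAt (fun z : Euc d => (-(1 / s)) • z + (b * Real.tanh (b * ⟪e, z⟫)) • e)
      ((-(1 / s)) • ContinuousLinearMap.id ℝ (Euc d) +
        ((b ^ 2 * (1 / Real.cosh (b * ⟪e, x⟫)) ^ 2) • innerSL ℝ e).smulRight e) x := hid.add hcomp
  rw [htot'.fderiv]
  simp only [ContinuousLinearMap.add_apply, ContinuousLinearMap.smul_apply,
    ContinuousLinearMap.id_apply, ContinuousLinearMap.smulRight_apply, innerSL_apply_apply,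
    inner_add_left, real_inner_smul_left, smul_eq_mul]
  ring

/-- For `μ = (1/2)δ_{e₁} + (1/2)δ_{−e₁}` on `ℝ^d`, `t > 0` and `x ∈ ℝ^d`,
writing `x₁ = ⟪e₁, x⟫`, the Hessian of `log p_t` is
`−(1/(1−e^{−2t})) I + (e^{−2t}/(1−e^{−2t})²) sech²(x₁/(2 sinh t)) e₁e₁ᵀ`,
stated through the associated bilinear forms. -/
theorem statement_13 (d : ℕ) (hd : 1 ≤ d) (t : ℝ) (ht : 0 < t) :
    ∀ x u v : Euc d,
      ⟪(fderiv ℝ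
          (fun z =>
            gradient
              (fun w =>
                Real.log
                  (ouDensity d (twoPointMix d (EuclideanSpace.single (⟨0, hd⟩ : Fin d) 1)) t w))
              z)
          x) u, v⟫ =
        -(1 / (1 - Real.exp (-2 * t))) * ⟪u, v⟫ +
          Real.exp (-2 * t) / (1 - Real.exp (-2 * t)) ^ 2 *
            (1 / Real.cosh
                (⟪EuclideanSpace.single (⟨0, hd⟩ : Fin d) (1 : ℝ), x⟫ / (2 * Real.sinh t))) ^ 2 *
            (⟪EuclideanSpace.single (⟨0, hd⟩ : Fin d) (1 : ℝ), u⟫ *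
              ⟪EuclideanSpace.single (⟨0, hd⟩ : Fin d) (1 : ℝ), v⟫) := by
  intro x u v
  set e : Euc d := EuclideanSpace.single (⟨0, hd⟩ : Fin d) (1 : ℝ) with hedef
  have he : ‖e‖ = 1 := by
    rw [hedef, EuclideanSpace.norm_single, norm_one]
  have hs : 0 < 1 - Real.exp (-2 * t) := by
    have : Real.exp (-2 * t) < 1 := by
      rw [Real.exp_lt_one_iff]; linarith
    linarith
  set s : ℝ := 1 - Real.exp (-2 * t) with hsdef
  set a : ℝ := Real.exp (-t) with hadef
  set b : ℝ := a / s with hbdef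
  -- b = 1/(2 sinh t)
  have hsinhpos : 0 < Real.sinh t := Real.sinh_pos_iff.2 ht
  have ha2 : a ^ 2 = Real.exp (-2 * t) := by
    rw [hadef, sq, ← Real.exp_add]
    congr 1
    ring
  have key : Real.exp (-t) * (2 * Real.sinh t) = 1 - Real.exp (-2 * t) := by
    have h1 : Real.exp (-t) * Real.exp t = 1 := by
      rw [← Real.exp_add]; norm_num
    have h2 : Real.exp (-t) * Real.exp (-t) = Real.exp (-2 * t) := by
      rw [← Real.exp_add]; congr 1; ring
    rw [Real.sinh_eq]
    calc Real.exp (-t) * (2 * ((Real.exp t - Real.exp (-t)) / 2))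
        = Real.exp (-t) * Real.exp t - Real.exp (-t) * Real.exp (-t) := by ring
      _ = 1 - Real.exp (-2 * t) := by rw [h1, h2]
  have hb : b = 1 / (2 * Real.sinh t) := by
    rw [hbdef, hadef, hsdef, ← key, div_mul_eq_div_div, div_self (Real.exp_ne_zero _)]
  -- the density, explicitly
  have hdens : ∀ z : Euc d, ouDensity d (twoPointMix d e) t z =
      (2 * π * s) ^ (-(d : ℝ) / 2) *
        (Real.exp (-(‖z‖ ^ 2 + a ^ 2) / (2 * s)) * Real.cosh (b * ⟪e, z⟫)) := by
    intro z
    rw [ouDensity, twoPointMix, twoPoint_integral e he t ht z]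
  -- the log-density, explicitly
  have hlog : (fun w : Euc d => Real.log (ouDensity d (twoPointMix d e) t w))
      = fun w : Euc d => (Real.log ((2 * π * s) ^ (-(d : ℝ) / 2)) - a ^ 2 / (2 * s))
          - ‖w‖ ^ 2 / (2 * s) + Real.log (Real.cosh (b * ⟪e, w⟫)) := by
    funext w
    have hcpos : (0 : ℝ) < (2 * π * s) ^ (-(d : ℝ) / 2) :=
      Real.rpow_pos_of_pos (by positivity) _
    rw [hdens w, Real.log_mul hcpos.ne'
        (mul_pos (Real.exp_pos _) (Real.cosh_pos _)).ne',
      Real.log_mul (Real.exp_pos _).ne' (Real.cosh_pos _).ne', Real.log_exp]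
    field_simp
    ring
  -- the gradient field, explicitly
  have hG : (fun z : Euc d =>
        gradient (fun w => Real.log (ouDensity d (twoPointMix d e) t w)) z)
      = fun z : Euc d => (-(1 / s)) • z + (b * Real.tanh (b * ⟪e, z⟫)) • e := by
    funext z
    rw [hlog]
    exact gradAux e _ s b z
  rw [hG, hessAux e s b x u v]
  have hbx : b * ⟪e, x⟫ = ⟪e, x⟫ / (2 * Real.sinh t) := by
    rw [hb]; ring
  have hb2 : b ^ 2 = Real.exp (-2 * t) / s ^ 2 := by
    rw [hbdef, div_pow, ha2]
  rw [hbx, hb2]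
end
end

section
/- Let d ≥ 1 and let μ = (1/2)δ_{e₁} + (1/2)δ_{−e₁} on ℝ^d. Then for every t > 0, the (1,1) entry of the Hessian of the log-density of μ_t relative to the standard Gaussian satisfies e₁ᵀ(∇²log p_t(0) + I_d)e₁ = 1 − 1/(1−e^{−2t}) + e^{−2t}/(1−e^{−2t})², and t²·e₁ᵀ(∇²log p_t(0) + I_d)e₁ → 1/4 as t → 0⁺. Consequently (1−e^{−2t})·e₁ᵀ(∇²log p_t(0) + I_d)e₁ → +∞ as t → 0⁺, so there is no constant β̃₀ such that the relative score x ↦ ∇log p_t(x) + x is (β̃₀/(1−e^{−2t}))-Lipschitz for all t ∈ (0,1): the time-varying smoothness assumption fails for mixtures of two point masses. -/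
open MeasureTheory Real
open scoped RealInnerProductSpace ENNReal Classical

noncomputable section

/-- The `(1,1)` entry `e₁ᵀ(∇²log p_t(0) + I)e₁` of the Hessian of the log-density of `μ_t`
relative to the standard Gaussian, for `μ = (1/2)δ_{e₁} + (1/2)δ_{−e₁}`. -/
def relHess11 (d : ℕ) (hd : 1 ≤ d) (t : ℝ) : ℝ :=
  ⟪(fderiv ℝ
      (fun z =>
        gradient
          (fun w =>
            Real.log
              (ouDensity d (twoPointMix d (EuclideanSpace.single (⟨0, hd⟩ : Fin d) 1)) t w))
          z)
      (0 : Euc d)) (EuclideanSpace.single (⟨0, hd⟩ : Fin d) (1 : ℝ)),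
    EuclideanSpace.single (⟨0, hd⟩ : Fin d) (1 : ℝ)⟫ + 1

namespace St14

def e1 (d : ℕ) (hd : 1 ≤ d) : Euc d := EuclideanSpace.single (⟨0, hd⟩ : Fin d) 1

lemma norm_e1 (d : ℕ) (hd : 1 ≤ d) : ‖e1 d hd‖ = 1 := by
  simp [e1, EuclideanSpace.norm_single]

lemma inner_e1_self (d : ℕ) (hd : 1 ≤ d) : ⟪e1 d hd, e1 d hd⟫ = (1:ℝ) := by
  rw [real_inner_self_eq_norm_sq, norm_e1]; norm_num

lemma s_pos {t : ℝ} (ht : 0 < t) : 0 < 1 - Real.exp (-2 * t) := by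
  have : Real.exp (-2 * t) < 1 := by
    rw [Real.exp_lt_one_iff]; nlinarith
  linarith

lemma density_eq (d : ℕ) (hd : 1 ≤ d) (t : ℝ) (ht : 0 < t) (x : Euc d) :
    ouDensity d (twoPointMix d (e1 d hd)) t x
      = (2 * π * (1 - Real.exp (-2 * t))) ^ (-(d : ℝ) / 2) *
        (Real.exp (-(‖x‖ ^ 2 + Real.exp (-2 * t)) / (2 * (1 - Real.exp (-2 * t)))) *
          Real.cosh ((Real.exp (-t) / (1 - Real.exp (-2 * t))) * ⟪e1 d hd, x⟫)) := by
  have hs := s_pos ht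
  set s := 1 - Real.exp (-2 * t) with hsdef
  set a := Real.exp (-t) with hadef
  set e := e1 d hd with hedef
  set f : Euc d → ℝ := fun y => Real.exp (-‖x - a • y‖ ^ 2 / (2 * s)) with hfdef
  have hint : ∀ p : Euc d, Integrable f (Measure.dirac p) := fun p =>
    (integrable_const (f p)).congr (ae_eq_dirac f).symm
  have key : (∫ y, f y ∂(twoPointMix d e)) = (1/2) * f e + (1/2) * f (-e) := by
    rw [twoPointMix, integral_add_measure ((hint e).smul_measure (by simp))
      ((hint (-e)).smul_measure (by simp)), integral_smul_measure, integral_smul_measure,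
      integral_dirac, integral_dirac]
    norm_num [smul_eq_mul]
  rw [ouDensity]
  rw [show (∫ y, Real.exp (-‖x - Real.exp (-t) • y‖ ^ 2 / (2 * (1 - Real.exp (-2 * t))))
      ∂(twoPointMix d e)) = ∫ y, f y ∂(twoPointMix d e) from rfl, key]
  congr 1
  have ha2 : a ^ 2 = Real.exp (-2 * t) := by
    rw [hadef, sq, ← Real.exp_add]; ring_nf
  have hne : ‖x - a • e‖ ^ 2 = ‖x‖ ^ 2 - 2 * (a * ⟪x, e⟫) + Real.exp (-2*t) := by
    rw [norm_sub_sq_real, real_inner_smul_right, norm_smul, Real.norm_eq_abs,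
      abs_of_pos (Real.exp_pos _), norm_e1, ← ha2]; ring
  have hpe : ‖x - a • (-e)‖ ^ 2 = ‖x‖ ^ 2 + 2 * (a * ⟪x, e⟫) + Real.exp (-2*t) := by
    rw [smul_neg, sub_neg_eq_add, norm_add_sq_real, real_inner_smul_right, norm_smul,
      Real.norm_eq_abs, abs_of_pos (Real.exp_pos _), norm_e1, ← ha2]; ring
  rw [hfdef]; simp only [hne, hpe]
  rw [Real.cosh_eq, real_inner_comm]
  rw [show -(‖x‖ ^ 2 - 2 * (a * ⟪e, x⟫) + Real.exp (-2*t)) / (2 * s)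
      = -(‖x‖ ^ 2 + Real.exp (-2*t)) / (2 * s) + (a / s) * ⟪e, x⟫ by
    field_simp; ring]
  rw [show -(‖x‖ ^ 2 + 2 * (a * ⟪e, x⟫) + Real.exp (-2*t)) / (2 * s)
      = -(‖x‖ ^ 2 + Real.exp (-2*t)) / (2 * s) + -((a / s) * ⟪e, x⟫) by
    field_simp; ring]
  rw [Real.exp_add, Real.exp_add]
  ring


def gfun (d : ℕ) (hd : 1 ≤ d) (t : ℝ) (z : Euc d) : Euc d :=
  (-(1 / (1 - Real.exp (-2 * t)))) • z +
    ((Real.exp (-t) / (1 - Real.exp (-2 * t))) *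
      (Real.sinh ((Real.exp (-t) / (1 - Real.exp (-2 * t))) * ⟪e1 d hd, z⟫) /
        Real.cosh ((Real.exp (-t) / (1 - Real.exp (-2 * t))) * ⟪e1 d hd, z⟫))) • e1 d hd

lemma hasGradientAt_log (d : ℕ) (hd : 1 ≤ d) (t : ℝ) (ht : 0 < t) (z : Euc d) :
    HasGradientAt (fun w => Real.log (ouDensity d (twoPointMix d (e1 d hd)) t w))
      (gfun d hd t z) z := by
  have hs := s_pos ht
  set s := 1 - Real.exp (-2 * t) with hsdef
  set a := Real.exp (-t) with hadef
  set e := e1 d hd with hedef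
  have hfun : (fun w => Real.log (ouDensity d (twoPointMix d e) t w))
      = fun w => (Real.log ((2 * π * s) ^ (-(d : ℝ) / 2))
          + ((-(1/(2*s))) * ⟪w, w⟫ + (-(Real.exp (-2*t)/(2*s)))))
        + Real.log (Real.cosh ((a / s) * ⟪e, w⟫)) := by
    funext w
    rw [density_eq d hd t ht w, Real.log_mul, Real.log_mul, Real.log_exp,
      real_inner_self_eq_norm_sq]
    · ring
    · exact (Real.exp_pos _).ne'
    · exact (Real.cosh_pos _).ne'
    · exact (Real.rpow_pos_of_pos (by positivity) _).ne'
    · exact (mul_pos (Real.exp_pos _) (Real.cosh_pos _)).ne'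
  rw [hfun, hasGradientAt_iff_hasFDerivAt]
  have hA := ((hasFDerivAt_id (𝕜 := ℝ) z).inner ℝ (hasFDerivAt_id z)).const_mul (-(1/(2*s)))
  have hB := (hA.add_const (-(Real.exp (-2*t)/(2*s)))).const_add
      (Real.log ((2 * π * s) ^ (-(d : ℝ) / 2)))
  have hv : HasFDerivAt (fun w : Euc d => (a / s) * ⟪e, w⟫)
      ((a / s) • (innerSL ℝ e)) z :=
    ((a / s) • (innerSL ℝ e)).hasFDerivAt
  have hq : HasDerivAt (fun u => Real.log (Real.cosh u))
      (Real.sinh ((a / s) * ⟪e, z⟫) / Real.cosh ((a / s) * ⟪e, z⟫)) ((a / s) * ⟪e, z⟫) :=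
    (Real.hasDerivAt_cosh _).log (Real.cosh_pos _).ne'
  have hC := hq.comp_hasFDerivAt z hv
  have hfd := hB.add hC
  refine hfd.congr_fderiv (Eq.symm ?_)
  ext w
  simp only [gfun, ← hedef, ← hsdef, ← hadef, InnerProductSpace.toDual_apply_apply,
    inner_add_left, real_inner_smul_left, ContinuousLinearMap.add_apply,
    ContinuousLinearMap.coe_comp', Function.comp_apply, ContinuousLinearMap.smul_apply,
    ContinuousLinearMap.coe_smul', Pi.smul_apply, innerSL_apply_apply, fderivInnerCLM_apply,
    ContinuousLinearMap.prod_apply, ContinuousLinearMap.coe_id', id_eq, smul_eq_mul]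
  rw [real_inner_comm w z]
  have hs' : s ≠ 0 := ne_of_gt hs
  have hc' : Real.cosh ((a / s) * ⟪e, z⟫) ≠ 0 := (Real.cosh_pos _).ne'
  field_simp
  ring


lemma grad_eq (d : ℕ) (hd : 1 ≤ d) (t : ℝ) (ht : 0 < t) :
    gradient (fun w => Real.log (ouDensity d (twoPointMix d (e1 d hd)) t w)) = gfun d hd t :=
  funext fun z => (hasGradientAt_log d hd t ht z).gradient

def G0 (d : ℕ) (hd : 1 ≤ d) (t : ℝ) : Euc d →L[ℝ] Euc d :=
  (-(1 / (1 - Real.exp (-2 * t)))) • ContinuousLinearMap.id ℝ (Euc d) +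
    ((Real.exp (-t) / (1 - Real.exp (-2 * t))) ^ 2) •
      ((innerSL ℝ (e1 d hd)).smulRight (e1 d hd))

lemma hasFDerivAt_gfun (d : ℕ) (hd : 1 ≤ d) (t : ℝ) (ht : 0 < t) :
    HasFDerivAt (gfun d hd t) (G0 d hd t) 0 := by
  have hs := s_pos ht
  set s := 1 - Real.exp (-2 * t) with hsdef
  set a := Real.exp (-t) with hadef
  set e := e1 d hd with hedef
  have h1 : HasFDerivAt (fun z : Euc d => (-(1 / s)) • z)
      ((-(1 / s)) • ContinuousLinearMap.id ℝ (Euc d)) 0 :=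
    (hasFDerivAt_id (0 : Euc d)).const_smul (-(1 / s))
  have hv : HasFDerivAt (fun w : Euc d => (a / s) * ⟪e, w⟫)
      ((a / s) • (innerSL ℝ e)) 0 :=
    ((a / s) • (innerSL ℝ e)).hasFDerivAt
  have hq0 : HasDerivAt (fun u => Real.sinh u / Real.cosh u)
      ((Real.cosh 0 * Real.cosh 0 - Real.sinh 0 * Real.sinh 0) / Real.cosh 0 ^ 2) 0 :=
    (Real.hasDerivAt_sinh 0).div (Real.hasDerivAt_cosh 0) (Real.cosh_pos 0).ne'
  have hq : HasDerivAt (fun u => Real.sinh u / Real.cosh u) 1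
      ((a / s) * ⟪e, (0 : Euc d)⟫) := by
    have h0 : (a / s) * ⟪e, (0 : Euc d)⟫ = 0 := by simp
    rw [h0]
    convert hq0 using 1
    simp
  have hφ := ((hq.comp_hasFDerivAt 0 hv).const_mul (a / s)).smul_const e
  have hfd := h1.add hφ
  refine hfd.congr_fderiv (Eq.symm ?_)
  refine ContinuousLinearMap.ext fun w => ?_
  simp only [G0, ← hedef, ← hsdef, ← hadef, ContinuousLinearMap.add_apply,
    ContinuousLinearMap.smul_apply, ContinuousLinearMap.coe_id', id_eq,
    ContinuousLinearMap.smulRight_apply, innerSL_apply_apply, ContinuousLinearMap.coe_smul',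
    Pi.smul_apply, one_smul, smul_eq_mul, smul_smul]
  module

lemma relHess11_eq (d : ℕ) (hd : 1 ≤ d) (t : ℝ) (ht : 0 < t) :
    relHess11 d hd t =
      1 - 1 / (1 - Real.exp (-2 * t)) +
        Real.exp (-2 * t) / (1 - Real.exp (-2 * t)) ^ 2 := by
  have hs := s_pos ht
  have hb : relHess11 d hd t
      = ⟪(fderiv ℝ (fun z => gradient
          (fun w => Real.log (ouDensity d (twoPointMix d (e1 d hd)) t w)) z) 0) (e1 d hd),
          e1 d hd⟫ + 1 := rfl
  rw [hb]
  have : (fun z => gradient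
      (fun w => Real.log (ouDensity d (twoPointMix d (e1 d hd)) t w)) z) = gfun d hd t := by
    funext z; exact congrFun (grad_eq d hd t ht) z
  rw [this, (hasFDerivAt_gfun d hd t ht).fderiv]
  have ha2 : Real.exp (-t) ^ 2 = Real.exp (-2 * t) := by
    rw [sq, ← Real.exp_add]; ring_nf
  simp only [G0, ContinuousLinearMap.add_apply, ContinuousLinearMap.smul_apply,
    ContinuousLinearMap.coe_id', id_eq, ContinuousLinearMap.smulRight_apply, innerSL_apply_apply,
    inner_add_left, real_inner_smul_left, inner_e1_self, smul_smul, smul_eq_mul]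
  rw [div_pow, ha2]
  ring


lemma relHess11_sq (d : ℕ) (hd : 1 ≤ d) (t : ℝ) (ht : 0 < t) :
    relHess11 d hd t = (Real.exp (-2 * t) / (1 - Real.exp (-2 * t))) ^ 2 := by
  have hs := s_pos ht
  rw [relHess11_eq d hd t ht]
  set q := 1 - Real.exp (-2 * t) with hq
  have hq' : q ≠ 0 := ne_of_gt hs
  have he : Real.exp (-2 * t) = 1 - q := by rw [hq]; ring
  rw [he]
  field_simp
  ring

lemma tendsto_s_div : Filter.Tendsto (fun t : ℝ => (1 - Real.exp (-2 * t)) / t)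
    (nhdsWithin 0 (Set.Ioi 0)) (nhds 2) := by
  have hlin : HasDerivAt (fun t : ℝ => -2 * t) (-2) 0 := by
    simpa using (hasDerivAt_id (0 : ℝ)).const_mul (-2)
  have hexp := hlin.exp
  have hder : HasDerivAt (fun t : ℝ => 1 - Real.exp (-2 * t)) 2 0 := by
    have h := (hasDerivAt_const (0 : ℝ) (1 : ℝ)).sub hexp
    exact h.congr_deriv (by norm_num)
  have hsl := hasDerivAt_iff_tendsto_slope.mp hder
  have hmono : nhdsWithin (0 : ℝ) (Set.Ioi 0) ≤ nhdsWithin 0 {(0 : ℝ)}ᶜ :=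
    nhdsWithin_mono 0 (fun x hx => ne_of_gt hx)
  refine (hsl.mono_left hmono).congr fun t => ?_
  simp [slope_def_field]

lemma tendsto_ratio : Filter.Tendsto (fun t : ℝ => t / (1 - Real.exp (-2 * t)))
    (nhdsWithin 0 (Set.Ioi 0)) (nhds (1 / 2)) := by
  have h := tendsto_s_div.inv₀ (by norm_num)
  rw [show (1 : ℝ) / 2 = 2⁻¹ by norm_num]
  exact h.congr fun t => inv_div _ _

lemma tendsto_exp2 : Filter.Tendsto (fun t : ℝ => Real.exp (-2 * t))
    (nhdsWithin 0 (Set.Ioi 0)) (nhds 1) := by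
  have h : Filter.Tendsto (fun t : ℝ => Real.exp (-2 * t)) (nhds 0) (nhds (Real.exp (-2 * 0))) :=
    (Real.continuous_exp.comp (continuous_const.mul continuous_id)).tendsto 0
  simpa using h.mono_left nhdsWithin_le_nhds


lemma part2 (d : ℕ) (hd : 1 ≤ d) :
    Filter.Tendsto (fun t : ℝ => t ^ 2 * relHess11 d hd t)
      (nhdsWithin 0 (Set.Ioi 0)) (nhds (1 / 4)) := by
  have h := (tendsto_ratio.mul tendsto_exp2).pow 2
  have h4 : ((1 / 2 * 1 : ℝ)) ^ 2 = 1 / 4 := by norm_num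
  rw [h4] at h
  refine h.congr' ?_
  filter_upwards [self_mem_nhdsWithin] with t ht
  rw [relHess11_sq d hd t ht, mul_pow, div_pow, div_pow]
  ring

lemma part3 (d : ℕ) (hd : 1 ≤ d) :
    Filter.Tendsto (fun t : ℝ => (1 - Real.exp (-2 * t)) * relHess11 d hd t)
      (nhdsWithin 0 (Set.Ioi 0)) Filter.atTop := by
  have hφ : Filter.Tendsto (fun t : ℝ => 1 - Real.exp (-2 * t))
      (nhdsWithin 0 (Set.Ioi 0)) (nhdsWithin 0 (Set.Ioi 0)) := by
    rw [tendsto_nhdsWithin_iff]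
    constructor
    · have hcont : Continuous (fun t : ℝ => 1 - Real.exp (-2 * t)) := by continuity
      have h := (hcont.tendsto 0).mono_left (nhdsWithin_le_nhds (s := Set.Ioi (0:ℝ)))
      simpa using h
    · filter_upwards [self_mem_nhdsWithin] with t ht
      exact s_pos ht
  have hinv := tendsto_inv_nhdsGT_zero.comp hφ
  have hnum : Filter.Tendsto (fun t : ℝ => Real.exp (-2 * t) ^ 2)
      (nhdsWithin 0 (Set.Ioi 0)) (nhds 1) := by
    have := tendsto_exp2.pow 2
    simpa using this
  have h := Filter.Tendsto.pos_mul_atTop one_pos hnum hinv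
  refine h.congr' ?_
  filter_upwards [self_mem_nhdsWithin] with t ht
  have hs := s_pos ht
  simp only [Function.comp_apply]
  rw [relHess11_sq d hd t ht, div_pow]
  rw [mul_div_assoc', eq_div_iff (pow_ne_zero 2 (ne_of_gt hs)), inv_eq_one_div,
    mul_div_assoc', div_mul_eq_mul_div, div_eq_iff (ne_of_gt hs)]
  ring

lemma hasFDerivAt_relScore (d : ℕ) (hd : 1 ≤ d) (t : ℝ) (ht : 0 < t) :
    HasFDerivAt (relScore d (twoPointMix d (e1 d hd)) t)
      (G0 d hd t + ContinuousLinearMap.id ℝ (Euc d)) 0 := by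
  have heq : relScore d (twoPointMix d (e1 d hd)) t = fun x => gfun d hd t x + x := by
    funext x
    rw [relScore, grad_eq d hd t ht]
  rw [heq]
  exact (hasFDerivAt_gfun d hd t ht).add (hasFDerivAt_id 0)

lemma inner_A (d : ℕ) (hd : 1 ≤ d) (t : ℝ) (ht : 0 < t) :
    ⟪(G0 d hd t + ContinuousLinearMap.id ℝ (Euc d)) (e1 d hd), e1 d hd⟫
      = relHess11 d hd t := by
  rw [relHess11_eq d hd t ht]
  have ha2 : Real.exp (-t) ^ 2 = Real.exp (-2 * t) := by rw [sq, ← Real.exp_add]; ring_nf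
  simp only [G0, ContinuousLinearMap.add_apply, ContinuousLinearMap.smul_apply,
    ContinuousLinearMap.coe_id', id_eq, ContinuousLinearMap.smulRight_apply, innerSL_apply_apply,
    inner_add_left, real_inner_smul_left, inner_e1_self, smul_smul, smul_eq_mul]
  rw [div_pow, ha2]
  ring

end St14

/-- For `μ = (1/2)δ_{e₁} + (1/2)δ_{−e₁}`:
`e₁ᵀ(∇²log p_t(0) + I)e₁ = 1 − 1/(1−e^{−2t}) + e^{−2t}/(1−e^{−2t})²`,
`t² e₁ᵀ(∇²log p_t(0) + I)e₁ → 1/4` as `t → 0⁺`, hence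
`(1−e^{−2t}) e₁ᵀ(∇²log p_t(0) + I)e₁ → +∞` as `t → 0⁺`, and there is no `β̃₀` making the
relative score `(β̃₀/(1−e^{−2t}))`-Lipschitz for all `t ∈ (0,1)`. -/


theorem statement_14 (d : ℕ) (hd : 1 ≤ d) :
    (∀ t : ℝ, 0 < t →
      relHess11 d hd t =
        1 - 1 / (1 - Real.exp (-2 * t)) +
          Real.exp (-2 * t) / (1 - Real.exp (-2 * t)) ^ 2) ∧
    Filter.Tendsto (fun t : ℝ => t ^ 2 * relHess11 d hd t)
      (nhdsWithin 0 (Set.Ioi 0)) (nhds (1 / 4)) ∧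
    Filter.Tendsto (fun t : ℝ => (1 - Real.exp (-2 * t)) * relHess11 d hd t)
      (nhdsWithin 0 (Set.Ioi 0)) Filter.atTop ∧
    ¬ ∃ β₀ : ℝ, ∀ t ∈ Set.Ioo (0 : ℝ) 1, ∀ x y : Euc d,
        ‖relScore d (twoPointMix d (EuclideanSpace.single (⟨0, hd⟩ : Fin d) 1)) t x -
            relScore d (twoPointMix d (EuclideanSpace.single (⟨0, hd⟩ : Fin d) 1)) t y‖ ≤
          β₀ / (1 - Real.exp (-2 * t)) * ‖x - y‖ := by
  refine ⟨fun t ht => St14.relHess11_eq d hd t ht, St14.part2 d hd, St14.part3 d hd, ?_⟩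
  rintro ⟨β₀, hβ⟩
  have hβ' : ∀ t ∈ Set.Ioo (0 : ℝ) 1, ∀ x y : Euc d,
      ‖relScore d (twoPointMix d (St14.e1 d hd)) t x -
          relScore d (twoPointMix d (St14.e1 d hd)) t y‖ ≤
        β₀ / (1 - Real.exp (-2 * t)) * ‖x - y‖ := hβ
  have key : ∀ t ∈ Set.Ioo (0 : ℝ) 1,
      (1 - Real.exp (-2 * t)) * relHess11 d hd t ≤ max β₀ 0 := by
    intro t htm
    have ht := htm.1
    have hs := St14.s_pos ht
    have hM0 : 0 ≤ max β₀ 0 / (1 - Real.exp (-2 * t)) := div_nonneg (le_max_right _ _) hs.le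
    have hlip : LipschitzWith (max β₀ 0 / (1 - Real.exp (-2 * t))).toNNReal
        (relScore d (twoPointMix d (St14.e1 d hd)) t) := by
      rw [lipschitzWith_iff_dist_le_mul]
      intro x y
      rw [dist_eq_norm, dist_eq_norm, Real.coe_toNNReal _ hM0]
      refine le_trans (hβ' t htm x y) ?_
      refine mul_le_mul_of_nonneg_right ?_ (norm_nonneg _)
      exact (div_le_div_iff_of_pos_right hs).mpr (le_max_left _ _)
    have hnorm := (St14.hasFDerivAt_relScore d hd t ht).le_of_lipschitz hlip
    rw [Real.coe_toNNReal _ hM0] at hnorm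
    have hle : relHess11 d hd t ≤ max β₀ 0 / (1 - Real.exp (-2 * t)) := by
      rw [← St14.inner_A d hd t ht]
      set A := St14.G0 d hd t + ContinuousLinearMap.id ℝ (Euc d) with hA
      calc ⟪A (St14.e1 d hd), St14.e1 d hd⟫
          ≤ ‖A (St14.e1 d hd)‖ * ‖St14.e1 d hd‖ := real_inner_le_norm _ _
        _ ≤ (‖A‖ * ‖St14.e1 d hd‖) * ‖St14.e1 d hd‖ :=
            mul_le_mul_of_nonneg_right (A.le_opNorm _) (norm_nonneg _)
        _ = ‖A‖ := by rw [St14.norm_e1]; ring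
        _ ≤ _ := hnorm
    calc (1 - Real.exp (-2 * t)) * relHess11 d hd t
        ≤ (1 - Real.exp (-2 * t)) * (max β₀ 0 / (1 - Real.exp (-2 * t))) :=
          mul_le_mul_of_nonneg_left hle hs.le
      _ = max β₀ 0 := by rw [mul_div_cancel₀ _ (ne_of_gt hs)]
  have hev1 : ∀ᶠ t in nhdsWithin (0:ℝ) (Set.Ioi 0),
      max β₀ 0 < (1 - Real.exp (-2 * t)) * relHess11 d hd t :=
    (St14.part3 d hd).eventually_gt_atTop _
  have hev2 : ∀ᶠ t in nhdsWithin (0:ℝ) (Set.Ioi 0), t ∈ Set.Ioo (0:ℝ) 1 := by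
    have h1 : ∀ᶠ t in nhdsWithin (0:ℝ) (Set.Ioi 0), t ∈ Set.Ioi (0:ℝ) :=
      eventually_mem_nhdsWithin
    have h2 : ∀ᶠ t in nhdsWithin (0:ℝ) (Set.Ioi 0), t < 1 :=
      Filter.Eventually.filter_mono nhdsWithin_le_nhds (eventually_lt_nhds (by norm_num))
    filter_upwards [h1, h2] with t hta htb
    exact ⟨hta, htb⟩
  obtain ⟨t, h1, h2⟩ := (hev1.and hev2).exists
  exact absurd (key t h2) (not_le.mpr h1)
end
end

section
/- There is a universal constant C such that for every real K ≥ 3 and all real numbers 0 ≤ a ≤ b < 1, the integral ∫_a^b (v/(1−v))^{K−1} dv is at most C·b^{K−1}·(1−b)^{2−K}/K. -/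
open Real

/-- There is a universal constant `C` such that for every real `K ≥ 3` and
`0 ≤ a ≤ b < 1`, `∫_a^b (v/(1−v))^{K−1} dv ≤ C b^{K−1} (1−b)^{2−K} / K`. -/
theorem statement_16 :
    ∃ C : ℝ, 0 < C ∧
      ∀ (K : ℝ), 3 ≤ K → ∀ a b : ℝ, 0 ≤ a → a ≤ b → b < 1 →
        (∫ v in a..b, (v / (1 - v)) ^ (K - 1)) ≤ C * b ^ (K - 1) * (1 - b) ^ (2 - K) / K := by
  refine ⟨3, by norm_num, ?_⟩
  intro K hK a b ha hab hb
  have hK1 : (1:ℝ) ≤ K - 1 := by linarith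
  have hK2 : (0:ℝ) < K - 2 := by linarith
  have hK0 : (0:ℝ) < K := by linarith
  set F : ℝ → ℝ := fun v => v ^ (K-1) * (1-v) ^ (2-K) / (K-2) with hF
  set f' : ℝ → ℝ := fun v =>
    ((K-1) * v ^ (K-2) * (1-v) ^ (2-K) + v ^ (K-1) * ((K-2) * (1-v) ^ (1-K))) / (K-2) with hf'
  have huIcc : Set.uIcc a b = Set.Icc a b := Set.uIcc_of_le hab
  have hmem : ∀ v ∈ Set.Icc a b, 0 ≤ v ∧ 0 < 1 - v := by
    intro v hv
    exact ⟨ha.trans hv.1, by linarith [hv.2]⟩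
  -- derivative
  have hderiv : ∀ v ∈ Set.uIcc a b, HasDerivAt F (f' v) v := by
    intro v hv
    rw [huIcc] at hv
    obtain ⟨hv0, hv1⟩ := hmem v hv
    have h1 : HasDerivAt (fun v : ℝ => v ^ (K-1)) ((K-1) * v ^ (K-2)) v := by
      have := Real.hasDerivAt_rpow_const (x := v) (p := K-1) (Or.inr hK1)
      convert this using 2
      ring_nf
    have h2 : HasDerivAt (fun v : ℝ => (1-v) ^ (2-K)) ((K-2) * (1-v) ^ (1-K)) v := by
      have hsub : HasDerivAt (fun v : ℝ => 1 - v) (-1) v := by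
        simpa using (hasDerivAt_id v).const_sub 1
      have := (Real.hasDerivAt_rpow_const (x := 1-v) (p := 2-K) (Or.inl hv1.ne')).comp v hsub
      have h21 : (2:ℝ)-K-1 = 1-K := by ring
      rw [h21] at this
      have e : (K-2) * (1-v)^(1-K) = (2-K) * (1-v)^(1-K) * -1 := by ring
      rw [e]; exact this
    exact (h1.mul h2).div_const (K-2)
  -- continuity of integrand
  have hgcont : ContinuousOn (fun v : ℝ => (v / (1 - v)) ^ (K - 1)) (Set.Icc a b) := by
    apply ContinuousOn.rpow_const
    · apply ContinuousOn.div continuousOn_id (by fun_prop)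
      intro v hv; exact (hmem v hv).2.ne'
    · intro v hv; exact Or.inr (by linarith)
  have hgint : IntervalIntegrable (fun v : ℝ => (v / (1 - v)) ^ (K - 1)) MeasureTheory.volume a b := by
    apply ContinuousOn.intervalIntegrable
    rwa [huIcc]
  -- continuity / integrability of f'
  have c1 : ContinuousOn (fun v:ℝ => v ^ (K-2)) (Set.Icc a b) :=
    continuousOn_id.rpow_const (fun v _ => Or.inr (by linarith))
  have c2 : ContinuousOn (fun v:ℝ => v ^ (K-1)) (Set.Icc a b) :=
    continuousOn_id.rpow_const (fun v _ => Or.inr (by linarith))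
  have c3 : ContinuousOn (fun v:ℝ => (1-v) ^ (2-K)) (Set.Icc a b) :=
    ContinuousOn.rpow_const (by fun_prop) (fun v hv => Or.inl (hmem v hv).2.ne')
  have c4 : ContinuousOn (fun v:ℝ => (1-v) ^ (1-K)) (Set.Icc a b) :=
    ContinuousOn.rpow_const (by fun_prop) (fun v hv => Or.inl (hmem v hv).2.ne')
  have hf'cont : ContinuousOn f' (Set.Icc a b) :=
    ((((continuousOn_const.mul c1).mul c3).add
      (c2.mul (continuousOn_const.mul c4))).div_const (K-2))
  have hf'int : IntervalIntegrable f' MeasureTheory.volume a b := by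
    apply ContinuousOn.intervalIntegrable
    rwa [huIcc]
  -- pointwise bound
  have hpt : ∀ v ∈ Set.Icc a b, (v / (1 - v)) ^ (K - 1) ≤ f' v := by
    intro v hv
    obtain ⟨hv0, hv1⟩ := hmem v hv
    have hg : (v / (1 - v)) ^ (K - 1) = v ^ (K-1) * (1-v) ^ (1-K) := by
      have h1K : (1:ℝ)-K = -(K-1) := by ring
      rw [Real.div_rpow hv0 hv1.le, h1K, Real.rpow_neg hv1.le, div_eq_mul_inv]
    have hfeq : f' v = (K-1) * v^(K-2) * (1-v)^(2-K) / (K-2) + v^(K-1)*(1-v)^(1-K) := by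
      simp only [hf']
      field_simp
    have hnn : 0 ≤ (K-1) * v^(K-2) * (1-v)^(2-K) / (K-2) :=
      div_nonneg (mul_nonneg (mul_nonneg (by linarith) (Real.rpow_nonneg hv0 _))
        (Real.rpow_nonneg hv1.le _)) hK2.le
    rw [hg, hfeq]
    linarith
  have hFTC := intervalIntegral.integral_eq_sub_of_hasDerivAt hderiv hf'int
  have hb0 : 0 ≤ b := ha.trans hab
  have h1b : 0 ≤ 1 - b := by linarith
  have hX : 0 ≤ b^(K-1)*(1-b)^(2-K) :=
    mul_nonneg (Real.rpow_nonneg hb0 _) (Real.rpow_nonneg h1b _)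
  calc (∫ v in a..b, (v / (1 - v)) ^ (K - 1)) ≤ ∫ v in a..b, f' v :=
        intervalIntegral.integral_mono_on hab hgint hf'int hpt
    _ = F b - F a := hFTC
    _ ≤ F b := by
        have hFa : 0 ≤ F a :=
          div_nonneg (mul_nonneg (Real.rpow_nonneg ha _)
            (Real.rpow_nonneg (by linarith : (0:ℝ) ≤ 1 - a) _)) hK2.le
        linarith
    _ ≤ 3 * b ^ (K - 1) * (1 - b) ^ (2 - K) / K := by
        show b^(K-1) * (1-b)^(2-K) / (K-2) ≤ _
        rw [div_le_div_iff₀ hK2 hK0]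
        nlinarith [mul_nonneg hX (by linarith : (0:ℝ) ≤ 2*K-6)]
end
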